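/- Let 𝕂 be ℝ or ℂ and let V be a finite-dimensional 𝕂-vector space. For a symmetric bilinear map S : V × V → 𝕂 define the 4-linear map γ(S) : V⁴ → 𝕂 by γ(S)(w,x,y,z) = (1/3)(S(w,z)·S(x,y) − S(w,y)·S(x,z)). Then the 𝕂-linear span of the set { γ(S) : S symmetric bilinear on V } equals the vector space of all algebraic curvature tensors on V; in particular every γ(S) is an algebraic curvature tensor and every algebraic curvature tensor is a finite 𝕂-linear combination of tensors γ(S). -/

import Mathlib

/-- An algebraic curvature tensor on a `𝕂`-vector space `V`: a 4-linear map `T : V⁴ → 𝕂`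
with `T(w,x,y,z) = -T(w,x,z,y) = T(y,z,w,x)` and the first Bianchi identity. -/
def IsACT {𝕂 : Type*} [RCLike 𝕂] {V : Type*} [AddCommGroup V] [Module 𝕂 V]
    (T : MultilinearMap 𝕂 (fun _ : Fin 4 => V) 𝕂) : Prop :=
  ∀ w x y z : V,
    T ![w, x, y, z] = - T ![w, x, z, y] ∧
    T ![w, x, y, z] = T ![y, z, w, x] ∧
    T ![w, x, y, z] + T ![w, y, z, x] + T ![w, z, x, y] = 0

set_option linter.unusedSectionVars false

section Aux

variable {𝕂 : Type*} [RCLike 𝕂] {V : Type*} [AddCommGroup V] [Module 𝕂 V]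

/-- slot assignment for the first product `S(w,z)·T(x,y)` -/
def sig1 : (Fin 2 ⊕ Fin 2) ≃ Fin 4 where
  toFun := Sum.elim ![0, 3] ![1, 2]
  invFun := ![Sum.inl 0, Sum.inr 0, Sum.inr 1, Sum.inl 1]
  left_inv := by decide
  right_inv := by decide

/-- slot assignment for the second product `S(w,y)·T(x,z)` -/
def sig2 : (Fin 2 ⊕ Fin 2) ≃ Fin 4 where
  toFun := Sum.elim ![0, 2] ![1, 3]
  invFun := ![Sum.inl 0, Sum.inr 0, Sum.inl 1, Sum.inr 1]
  left_inv := by decide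
  right_inv := by decide

/-- product of two bilinear maps to a 4-linear map, slots given by `σ` -/
noncomputable def mul4 (S T : MultilinearMap 𝕂 (fun _ : Fin 2 => V) 𝕂)
    (σ : (Fin 2 ⊕ Fin 2) ≃ Fin 4) : MultilinearMap 𝕂 (fun _ : Fin 4 => V) 𝕂 :=
  (LinearMap.mul' 𝕂 𝕂).compMultilinearMap (MultilinearMap.domDomCongr σ (S.domCoprod T))

lemma mul4_apply (S T : MultilinearMap 𝕂 (fun _ : Fin 2 => V) 𝕂)
    (σ : (Fin 2 ⊕ Fin 2) ≃ Fin 4) (v : Fin 4 → V) :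
    mul4 S T σ v = S ![v (σ (Sum.inl 0)), v (σ (Sum.inl 1))] *
      T ![v (σ (Sum.inr 0)), v (σ (Sum.inr 1))] := by
  have h1 : (fun i : Fin 2 => v (σ (Sum.inl i))) = ![v (σ (Sum.inl 0)), v (σ (Sum.inl 1))] := by
    funext i; fin_cases i <;> rfl
  have h2 : (fun i : Fin 2 => v (σ (Sum.inr i))) = ![v (σ (Sum.inr 0)), v (σ (Sum.inr 1))] := by
    funext i; fin_cases i <;> rfl
  simp [mul4, MultilinearMap.domDomCongr_apply, MultilinearMap.domCoprod_apply,
    LinearMap.compMultilinearMap_apply, LinearMap.mul'_apply, h1, h2]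

/-- `γ(S)` -/
noncomputable def gam (S : MultilinearMap 𝕂 (fun _ : Fin 2 => V) 𝕂) :
    MultilinearMap 𝕂 (fun _ : Fin 4 => V) 𝕂 :=
  (3 : 𝕂)⁻¹ • (mul4 S S sig1 - mul4 S S sig2)

lemma gam_apply (S : MultilinearMap 𝕂 (fun _ : Fin 2 => V) 𝕂) (w x y z : V) :
    gam S ![w, x, y, z] =
      (3 : 𝕂)⁻¹ * (S ![w, z] * S ![x, y] - S ![w, y] * S ![x, z]) := by
  have e1 : sig1 (Sum.inl 0) = (0 : Fin 4) := rfl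
  have e2 : sig1 (Sum.inl 1) = (3 : Fin 4) := rfl
  have e3 : sig1 (Sum.inr 0) = (1 : Fin 4) := rfl
  have e4 : sig1 (Sum.inr 1) = (2 : Fin 4) := rfl
  have f1 : sig2 (Sum.inl 0) = (0 : Fin 4) := rfl
  have f2 : sig2 (Sum.inl 1) = (2 : Fin 4) := rfl
  have f3 : sig2 (Sum.inr 0) = (1 : Fin 4) := rfl
  have f4 : sig2 (Sum.inr 1) = (3 : Fin 4) := rfl
  simp [gam, MultilinearMap.smul_apply, MultilinearMap.sub_apply, mul4_apply,
    e1, e2, e3, e4, f1, f2, f3, f4, smul_eq_mul]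

/-- The submodule of algebraic curvature tensors. -/
def actSub (𝕂 : Type*) [RCLike 𝕂] (V : Type*) [AddCommGroup V] [Module 𝕂 V] :
    Submodule 𝕂 (MultilinearMap 𝕂 (fun _ : Fin 4 => V) 𝕂) where
  carrier := {T | IsACT T}
  zero_mem' := by intro w x y z; simp
  add_mem' := by
    intro a b ha hb w x y z
    obtain ⟨h1, h2, h3⟩ := ha w x y z
    obtain ⟨g1, g2, g3⟩ := hb w x y z
    refine ⟨?_, ?_, ?_⟩ <;> simp only [MultilinearMap.add_apply]
    · rw [h1, g1]; ring
    · rw [h2, g2]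
    · linear_combination h3 + g3
  smul_mem' := by
    intro c a ha w x y z
    obtain ⟨h1, h2, h3⟩ := ha w x y z
    refine ⟨?_, ?_, ?_⟩ <;> simp only [MultilinearMap.smul_apply, smul_eq_mul]
    · rw [h1]; ring
    · rw [h2]
    · linear_combination c * h3

/-- flip both pairs -/
lemma tflip {T : MultilinearMap 𝕂 (fun _ : Fin 4 => V) 𝕂} (hT : IsACT T) (w x y z : V) :
    T ![w, x, y, z] = T ![x, w, z, y] := by
  have h1 := fun a b c d => (hT a b c d).1
  have h2 := fun a b c d => (hT a b c d).2.1
  linear_combination (h2 w x y z) + (h1 y z w x) + (h2 x w y z) - (h1 x w y z)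

/-- the symmetrized tensor `Q` -/
def qv (T : MultilinearMap 𝕂 (fun _ : Fin 4 => V) 𝕂) (w x y z : V) : 𝕂 :=
  T ![w, y, z, x] + T ![w, z, y, x]

lemma qsym1 {T : MultilinearMap 𝕂 (fun _ : Fin 4 => V) 𝕂} (hT : IsACT T) (w x y z : V) :
    qv T x w y z = qv T w x y z := by
  have hf := tflip hT
  have h2 := fun a b c d => (hT a b c d).2.1
  simp only [qv]
  linear_combination (hf x y z w) + (h2 y x w z) + (hf x z y w) + (h2 z x w y)

lemma qsym2 (T : MultilinearMap 𝕂 (fun _ : Fin 4 => V) 𝕂) (w x y z : V) :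
    qv T w x z y = qv T w x y z := by
  simp only [qv]; ring

lemma qswap {T : MultilinearMap 𝕂 (fun _ : Fin 4 => V) 𝕂} (hT : IsACT T) (w x y z : V) :
    qv T y z w x = qv T w x y z := by
  have hf := tflip hT
  have h2 := fun a b c d => (hT a b c d).2.1
  simp only [qv]
  linear_combination (hf y w x z) + (h2 y x w z)

lemma qmain {T : MultilinearMap 𝕂 (fun _ : Fin 4 => V) 𝕂} (hT : IsACT T) (w x y z : V) :
    qv T w z x y - qv T w y x z = 3 * T ![w, x, y, z] := by
  have h1 := fun a b c d => (hT a b c d).1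
  have h3 := fun a b c d => (hT a b c d).2.2
  simp only [qv]
  linear_combination (-1 : 𝕂) * (h1 w x y z) + (h1 w y x z) - (h3 w x y z)

variable {ι : Type*} [Fintype ι] [DecidableEq ι]

/-- the "double Kronecker delta" coefficient -/
def dd (𝕂 : Type*) [RCLike 𝕂] {ι : Type*} [DecidableEq ι] (i j a c : ι) : 𝕂 :=
  (if a = i then 1 else 0) * (if c = j then 1 else 0) +
  (if a = j then 1 else 0) * (if c = i then 1 else 0)

lemma d1 (G : ι → 𝕂) (a : ι) : ∑ i : ι, (if a = i then (1 : 𝕂) else 0) * G i = G a := by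
  simp [ite_mul, one_mul, zero_mul]

lemma collapse (H : ι × ι → 𝕂) (a c : ι) :
    ∑ p : ι × ι, dd 𝕂 p.1 p.2 a c * H p = H (a, c) + H (c, a) := by
  have e : ∀ i j : ι, dd 𝕂 i j a c * H (i, j)
      = (if c = j then (1 : 𝕂) else 0) * ((if a = i then (1 : 𝕂) else 0) * H (i, j))
        + (if a = j then (1 : 𝕂) else 0) * ((if c = i then (1 : 𝕂) else 0) * H (i, j)) := by
    intro i j; simp only [dd]; ring
  simp only [Fintype.sum_prod_type, e, Finset.sum_add_distrib, d1]

lemma collapse2 (H : ι × ι → ι × ι → 𝕂) (a c a' c' : ι) :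
    ∑ p : ι × ι, ∑ q : ι × ι, dd 𝕂 p.1 p.2 a c * dd 𝕂 q.1 q.2 a' c' * H p q =
      (H (a, c) (a', c') + H (a, c) (c', a')) + (H (c, a) (a', c') + H (c, a) (c', a')) := by
  have e : ∀ p : ι × ι, ∑ q : ι × ι, dd 𝕂 p.1 p.2 a c * dd 𝕂 q.1 q.2 a' c' * H p q
      = dd 𝕂 p.1 p.2 a c * H p (a', c') + dd 𝕂 p.1 p.2 a c * H p (c', a') := by
    intro p
    have f : ∀ q : ι × ι, dd 𝕂 p.1 p.2 a c * dd 𝕂 q.1 q.2 a' c' * H p q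
        = dd 𝕂 q.1 q.2 a' c' * (dd 𝕂 p.1 p.2 a c * H p q) := fun q => by ring
    simp only [f, collapse]
  simp only [e, Finset.sum_add_distrib, collapse]
  ring

/-- per-term ring identity used to isolate the cross terms -/
lemma term_eq (c u1 u2 u3 u4 w1 w2 w3 w4 : 𝕂) :
    (8 : 𝕂)⁻¹ * c * ((3 : 𝕂)⁻¹ * ((u1 + w1) * (u2 + w2) - (u3 + w3) * (u4 + w4))
        - (3 : 𝕂)⁻¹ * (u1 * u2 - u3 * u4) - (3 : 𝕂)⁻¹ * (w1 * w2 - w3 * w4))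
      = u1 * w2 * ((24 : 𝕂)⁻¹ * c) + u2 * w1 * ((24 : 𝕂)⁻¹ * c)
        - u3 * w4 * ((24 : 𝕂)⁻¹ * c) - u4 * w3 * ((24 : 𝕂)⁻¹ * c) := by
  ring

/-- coordinate product bilinear map -/
noncomputable def cp (b : Module.Basis ι 𝕂 V) (i j : ι) : MultilinearMap 𝕂 (fun _ : Fin 2 => V) 𝕂 :=
  (MultilinearMap.mkPiAlgebra 𝕂 (Fin 2) 𝕂).compLinearMap ![b.coord i, b.coord j]

lemma cp_apply (b : Module.Basis ι 𝕂 V) (i j : ι) (x y : V) :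
    cp b i j ![x, y] = b.coord i x * b.coord j y := by
  simp [cp, MultilinearMap.compLinearMap_apply, MultilinearMap.mkPiAlgebra_apply,
    Fin.prod_univ_two]

/-- symmetrized coordinate product -/
noncomputable def fp (b : Module.Basis ι 𝕂 V) (p : ι × ι) : MultilinearMap 𝕂 (fun _ : Fin 2 => V) 𝕂 :=
  cp b p.1 p.2 + cp b p.2 p.1

lemma fp_apply (b : Module.Basis ι 𝕂 V) (p : ι × ι) (x y : V) :
    fp b p ![x, y] = b.coord p.1 x * b.coord p.2 y + b.coord p.2 x * b.coord p.1 y := by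
  simp [fp, cp_apply]

lemma fp_symm (b : Module.Basis ι 𝕂 V) (p : ι × ι) (x y : V) :
    fp b p ![x, y] = fp b p ![y, x] := by
  simp only [fp_apply]; ring

lemma fp_basis (b : Module.Basis ι 𝕂 V) (p : ι × ι) (a c : ι) :
    fp b p ![b a, b c] = dd 𝕂 p.1 p.2 a c := by
  simp only [fp_apply, dd, Module.Basis.coord_apply, Module.Basis.repr_self_apply, Finsupp.single_apply]

end Aux

/-- The span of the tensors `γ(S)`, `S` symmetric bilinear, is exactly the space of
algebraic curvature tensors. -/
theorem stmt0 {𝕂 : Type*} [RCLike 𝕂] (V : Type*) [AddCommGroup V] [Module 𝕂 V]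
    [FiniteDimensional 𝕂 V] :
    (Submodule.span 𝕂
        {T : MultilinearMap 𝕂 (fun _ : Fin 4 => V) 𝕂 |
          ∃ S : MultilinearMap 𝕂 (fun _ : Fin 2 => V) 𝕂,
            (∀ x y : V, S ![x, y] = S ![y, x]) ∧
            ∀ w x y z : V,
              T ![w, x, y, z] =
                (3 : 𝕂)⁻¹ * (S ![w, z] * S ![x, y] - S ![w, y] * S ![x, z])} :
      Set (MultilinearMap 𝕂 (fun _ : Fin 4 => V) 𝕂)) =
      {T | IsACT T} := by
  set G : Set (MultilinearMap 𝕂 (fun _ : Fin 4 => V) 𝕂) :=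
    {T : MultilinearMap 𝕂 (fun _ : Fin 4 => V) 𝕂 |
      ∃ S : MultilinearMap 𝕂 (fun _ : Fin 2 => V) 𝕂,
        (∀ x y : V, S ![x, y] = S ![y, x]) ∧
        ∀ w x y z : V,
          T ![w, x, y, z] =
            (3 : 𝕂)⁻¹ * (S ![w, z] * S ![x, y] - S ![w, y] * S ![x, z])} with hG
  apply Set.Subset.antisymm
  · -- span ⊆ ACT
    have hgen : G ⊆ (actSub 𝕂 V : Set (MultilinearMap 𝕂 (fun _ : Fin 4 => V) 𝕂)) := by
      rintro T ⟨S, hsym, hval⟩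
      intro w x y z
      refine ⟨?_, ?_, ?_⟩
      · rw [hval w x y z, hval w x z y]; ring
      · rw [hval w x y z, hval y z w x, hsym y x, hsym z w, hsym y w, hsym z x]; ring
      · rw [hval w x y z, hval w y z x, hval w z x y, hsym y x, hsym z x, hsym z y]; ring
    intro T hT
    exact Submodule.span_le.mpr hgen hT
  · -- ACT ⊆ span
    intro T hT
    have hT' : IsACT T := hT
    set ι := Fin (Module.finrank 𝕂 V)
    set b : Module.Basis ι 𝕂 V := Module.finBasis 𝕂 V with hb
    -- membership of the generators
    have hmem : ∀ S : MultilinearMap 𝕂 (fun _ : Fin 2 => V) 𝕂,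
        (∀ x y : V, S ![x, y] = S ![y, x]) → gam S ∈ G := by
      intro S hs
      exact ⟨S, hs, fun w x y z => gam_apply S w x y z⟩
    -- the key decomposition
    have key : T = ∑ p : ι × ι, ∑ q : ι × ι,
        ((8 : 𝕂)⁻¹ * qv T (b p.1) (b p.2) (b q.1) (b q.2)) •
          (gam (fp b p + fp b q) - gam (fp b p) - gam (fp b q)) := by
      apply Module.Basis.ext_multilinear (fun _ => b)
      intro v
      have hv : (fun i => b (v i)) = ![b (v 0), b (v 1), b (v 2), b (v 3)] := by
        funext i; fin_cases i <;> rfl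
      rw [hv]
      simp only [MultilinearMap.sum_apply, MultilinearMap.smul_apply,
        MultilinearMap.sub_apply, gam_apply, MultilinearMap.add_apply, fp_basis,
        smul_eq_mul]
      simp only [term_eq]
      simp only [Finset.sum_sub_distrib, Finset.sum_add_distrib]
      simp only [collapse2]
      have hq1 := fun a b' c d => qsym1 hT' (w := a) (x := b') (y := c) (z := d)
      have hq2 := fun a b' c d => qsym2 T (w := a) (x := b') (y := c) (z := d)
      have hqs := fun a b' c d => qswap hT' (w := a) (x := b') (y := c) (z := d)
      rw [hq2 (b (v 0)) (b (v 3)) (b (v 1)) (b (v 2)),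
        hq2 (b (v 3)) (b (v 0)) (b (v 1)) (b (v 2)),
        hq2 (b (v 1)) (b (v 2)) (b (v 0)) (b (v 3)),
        hq2 (b (v 2)) (b (v 1)) (b (v 0)) (b (v 3)),
        hq2 (b (v 0)) (b (v 2)) (b (v 1)) (b (v 3)),
        hq2 (b (v 2)) (b (v 0)) (b (v 1)) (b (v 3)),
        hq2 (b (v 1)) (b (v 3)) (b (v 0)) (b (v 2)),
        hq2 (b (v 3)) (b (v 1)) (b (v 0)) (b (v 2)),
        hq1 (b (v 0)) (b (v 3)) (b (v 1)) (b (v 2)),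
        hq1 (b (v 1)) (b (v 2)) (b (v 0)) (b (v 3)),
        hq1 (b (v 0)) (b (v 2)) (b (v 1)) (b (v 3)),
        hq1 (b (v 1)) (b (v 3)) (b (v 0)) (b (v 2)),
        hqs (b (v 0)) (b (v 3)) (b (v 1)) (b (v 2)),
        hqs (b (v 0)) (b (v 2)) (b (v 1)) (b (v 3))]
      linear_combination (-(3 : 𝕂)⁻¹) * qmain hT' (b (v 0)) (b (v 1)) (b (v 2)) (b (v 3))
    rw [key]
    refine Submodule.sum_mem _ fun p _ => Submodule.sum_mem _ fun q _ =>
      Submodule.smul_mem _ _ (Submodule.sub_mem _ (Submodule.sub_mem _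
        (Submodule.subset_span ?_) (Submodule.subset_span ?_)) (Submodule.subset_span ?_))
    · refine hmem _ fun x y => ?_
      simp only [MultilinearMap.add_apply]
      rw [fp_symm b p x y, fp_symm b q x y]
    · exact hmem _ (fun x y => fp_symm b p x y)
    · exact hmem _ (fun x y => fp_symm b q x y)
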